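/- For every pair of integers n, d with 2 ≤ d ≤ n, there exists a local Gorenstein commutative K-algebra A with maximal ideal m such that dim_K A = n + 1 and Soc A = m^d. -/

import Mathlib

set_option synthInstance.maxHeartbeats 1000000
set_option maxHeartbeats 1000000


namespace Stmt11

abbrev Mon (e kk : ℕ) : Type := Option (Fin (e+3) ⊕ Fin kk)

namespace Mon

variable {e kk : ℕ}

instance : DecidableEq (Mon e kk) := inferInstanceAs (DecidableEq (Option _))
instance : Fintype (Mon e kk) := inferInstanceAs (Fintype (Option _))

def t (i : Fin (e+3)) : Mon e kk := some (.inl i)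
def u (j : Fin kk) : Mon e kk := some (.inr j)
def z : Mon e kk := none

def mul : Mon e kk → Mon e kk → Mon e kk
  | none, _ => none
  | some _, none => none
  | some (.inl i), some (.inl j) =>
      if h : i.val + j.val ≤ e+2 then some (.inl ⟨i.val+j.val, by omega⟩) else none
  | some (.inl i), some (.inr j) => if i.val = 0 then some (.inr j) else none
  | some (.inr j), some (.inl i) => if i.val = 0 then some (.inr j) else none
  | some (.inr j), some (.inr j') => if j = j' then some (.inl ⟨e+2, by omega⟩) else none

instance : Mul (Mon e kk) := ⟨mul⟩
instance : One (Mon e kk) := ⟨t 0⟩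

lemma mul_def (a b : Mon e kk) : a * b = mul a b := rfl

@[simp] lemma z_mul (a : Mon e kk) : z * a = z := rfl
@[simp] lemma mul_z (a : Mon e kk) : a * z = z := by rcases a with _ | (i | j) <;> rfl

lemma t_mul_t (i j : Fin (e+3)) :
    (t i : Mon e kk) * t j =
      if h : i.val + j.val ≤ e+2 then t ⟨i.val+j.val, by omega⟩ else z := rfl

lemma t_mul_u (i : Fin (e+3)) (j : Fin kk) :
    (t i : Mon e kk) * u j = if i.val = 0 then u j else z := rfl

lemma u_mul_t (i : Fin (e+3)) (j : Fin kk) :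
    (u j : Mon e kk) * t i = if i.val = 0 then u j else z := rfl

lemma u_mul_u (j j' : Fin kk) :
    (u j : Mon e kk) * u j' = if j = j' then t ⟨e+2, by omega⟩ else z := rfl

lemma one_def : (1 : Mon e kk) = t 0 := rfl

private lemma mul_comm' (a b : Mon e kk) : a * b = b * a := by
  rcases a with _ | (i | j) <;> rcases b with _ | (i' | j')
  all_goals simp only [mul_def, mul]
  all_goals try split_ifs
  all_goals try rfl
  all_goals try omega
  all_goals try (simp only [Option.some.injEq, Sum.inl.injEq, Fin.mk.injEq]; omega)
  all_goals try simp_all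

private lemma one_mul' (a : Mon e kk) : 1 * a = a := by
  have h0 : ((0 : Fin (e+3)) : ℕ) = 0 := by simp
  rcases a with _ | (i | j)
  · rfl
  · simp only [one_def, t, mul_def, mul, h0]
    rw [dif_pos (by omega)]
    exact congrArg _ (congrArg _ (Fin.ext (Nat.zero_add _)))
  · simp only [one_def, t, mul_def, mul, h0]
    simp

private lemma mul_assoc' (a b c : Mon e kk) : a * b * c = a * (b * c) := by
  rcases a with _ | (i | j) <;> rcases b with _ | (i' | j') <;> rcases c with _ | (i'' | j'')
  all_goals simp only [mul_def, mul]
  all_goals try split_ifs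
  all_goals try simp only [mul]
  all_goals try split_ifs
  all_goals try simp only [mul]
  all_goals try split_ifs
  all_goals try rfl
  all_goals try omega
  all_goals try (simp only [Option.some.injEq, Sum.inl.injEq, Fin.mk.injEq]; omega)
  all_goals try simp_all

instance : CommMonoid (Mon e kk) where
  mul_assoc := mul_assoc'
  one_mul := one_mul'
  mul_one a := by rw [mul_comm' a 1]; exact one_mul' a
  mul_comm := mul_comm'

end Mon
end Stmt11

namespace Stmt11
namespace Mon

variable {e kk : ℕ}

lemma one_def' : (1 : Mon e kk) = some (.inl 0) := rfl

@[simp] lemma z_ne_one : (z : Mon e kk) ≠ 1 := by simp [z, one_def']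
@[simp] lemma one_ne_z : (1 : Mon e kk) ≠ z := by simp [z, one_def']

def mt1 : Mon e kk := t ⟨1, by omega⟩
def top : Mon e kk := t ⟨e+2, by omega⟩

lemma mt1_ne_one : (mt1 : Mon e kk) ≠ 1 := by simp [mt1, one_def', t, Fin.ext_iff]
lemma top_ne_z : (top : Mon e kk) ≠ z := by simp [top, z, t]
lemma top_ne_one : (top : Mon e kk) ≠ 1 := by simp [top, one_def', t, Fin.ext_iff]
lemma u_ne_one (j : Fin kk) : (u j : Mon e kk) ≠ 1 := by simp [u, one_def']
lemma u_ne_z (j : Fin kk) : (u j : Mon e kk) ≠ z := by simp [u, z]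
lemma t_ne_z (i : Fin (e+3)) : (t i : Mon e kk) ≠ z := by simp [t, z]
lemma mt1_ne_z : (mt1 : Mon e kk) ≠ z := t_ne_z _

lemma mul_eq_one_iff (m m' : Mon e kk) : m * m' = 1 ↔ m = 1 ∧ m' = 1 := by
  rcases m with _ | (i | j) <;> rcases m' with _ | (i' | j') <;>
    simp only [mul_def, mul, one_def', z]
  all_goals try (simp [Fin.ext_iff, -Fin.val_eq_zero_iff]; done)
  all_goals split_ifs <;> (try simp [Fin.ext_iff, -Fin.val_eq_zero_iff]) <;> (try omega)

/-- weight function -/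
def ω : Mon e kk → ℕ
  | none => 2*e+6
  | some (.inl i) => 2*i.val
  | some (.inr _) => e+2

lemma ω_le (m : Mon e kk) : ω m ≤ 2*e+6 := by
  rcases m with _ | (i | j) <;> simp only [ω] <;> omega

lemma two_le_ω (m : Mon e kk) (h : m ≠ 1) : 2 ≤ ω m := by
  rcases m with _ | (i | j) <;> simp only [ω] <;> try omega
  rcases Nat.eq_zero_or_pos i.val with h0 | h0
  · exfalso
    apply h
    simp only [one_def', Option.some.injEq, Sum.inl.injEq]
    exact Fin.ext (by simpa using h0)
  · omega

lemma eq_z_of_ω (m : Mon e kk) (h : 2*e+6 ≤ ω m) : m = z := by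
  rcases m with _ | (i | j)
  · rfl
  · have := i.isLt; simp only [ω] at h; omega
  · simp only [ω] at h; omega

lemma ω_superadd (m m' : Mon e kk) : m * m' = z ∨ ω m + ω m' ≤ ω (m * m') := by
  rcases m with _ | (i | j) <;> rcases m' with _ | (i' | j')
  all_goals simp only [mul_def, mul, z]
  all_goals try (left; trivial)
  · split_ifs with h
    · right; simp only [ω]; omega
    · left; rfl
  · split_ifs with h
    · right; simp only [ω]; omega
    · left; rfl
  · split_ifs with h
    · right; simp only [ω]; omega
    · left; rfl
  · split_ifs with h
    · right; simp only [ω]; omega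
    · left; rfl

lemma z_pow (n : ℕ) : (z : Mon e kk) ^ (n+1) = z := by
  rw [pow_succ, mul_z]

lemma ω_pow (m : Mon e kk) (n : ℕ) :
    m ^ (n+1) = z ∨ (n+1) * ω m ≤ ω (m ^ (n+1)) := by
  induction n with
  | zero => right; rw [pow_one]; omega
  | succ n ih =>
    rw [pow_succ]
    rcases ih with h | h
    · left; rw [h, z_mul]
    · rcases ω_superadd (m ^ (n+1)) m with h2 | h2
      · left; exact h2
      · right
        rw [show n+1+1 = (n+1)+1 from rfl, Nat.add_mul, one_mul]
        omega

lemma pow_eq_z (m : Mon e kk) (h : m ≠ 1) : m ^ (2*e+6) = z := by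
  have h2 := two_le_ω m h
  rw [show 2*e+6 = (2*e+5)+1 by omega]
  rcases ω_pow m (2*e+5) with hz | hle
  · exact hz
  · exfalso
    have hb := ω_le (m ^ (2*e+5+1))
    have := Nat.mul_le_mul_left (2*e+5+1) h2
    omega

lemma mt1_pow (j : ℕ) (hj : j ≤ e+2) : (mt1 : Mon e kk) ^ j = t ⟨j, by omega⟩ := by
  induction j with
  | zero =>
    rw [pow_zero, one_def']
    simp [t, Fin.ext_iff]
  | succ j ih =>
    rw [pow_succ, ih (by omega), mt1, t_mul_t]
    rw [dif_pos (by simp; omega)]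

lemma mt1_pow_top : (mt1 : Mon e kk) ^ (e+2) = top := mt1_pow (e+2) le_rfl

lemma mul_mt1_eq_iff (m : Mon e kk) (i : ℕ) (hi : i + 1 ≤ e+2) :
    m * mt1 = t ⟨i+1, by omega⟩ ↔ m = t ⟨i, by omega⟩ := by
  rcases m with _ | (i' | j')
  · rw [show (none : Mon e kk) = z from rfl, z_mul]
    simp [z, t]
  · rw [show (some (.inl i') : Mon e kk) = t i' from rfl, mt1, t_mul_t]
    split_ifs with h
    · simp only [t, Option.some.injEq, Sum.inl.injEq]
      constructor
      · intro hh; have := congrArg Fin.val hh; simp at this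
        exact Fin.ext (by simp; omega)
      · intro hh; have := congrArg Fin.val hh; simp at this
        exact Fin.ext (by simp; omega)
    · simp only at h
      constructor
      · intro hh; exact absurd hh (by simp [z, t])
      · intro hh; simp [t, Fin.ext_iff] at hh; omega
  · rw [show (some (.inr j') : Mon e kk) = u j' from rfl, mt1, u_mul_t]
    rw [if_neg (by simp)]
    simp [z, t, u]

lemma mul_u_eq_top_iff (m : Mon e kk) (j : Fin kk) :
    m * u j = top ↔ m = u j := by
  rcases m with _ | (i' | j')
  · rw [show (none : Mon e kk) = z from rfl, z_mul]
    simp [z, top, t, u]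
  · rw [show (some (.inl i') : Mon e kk) = t i' from rfl, t_mul_u]
    split_ifs with h
    · simp [u, top, t]
    · simp [z, top, t, u]
  · rw [show (some (.inr j') : Mon e kk) = u j' from rfl, u_mul_u]
    split_ifs with h
    · subst h; simp [top, u]
    · simp only [z, top, t, u, Option.some.injEq, Sum.inr.injEq]
      constructor
      · intro hh; exact absurd hh (by simp)
      · intro hh; exact absurd hh h

end Mon
end Stmt11

namespace Stmt11

open Mon MonoidAlgebra

variable (K : Type*) [Field K] (e kk : ℕ)

abbrev A0 := MonoidAlgebra K (Mon e kk)

noncomputable def Iz : Ideal (A0 K e kk) := Ideal.span {single Mon.z 1}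

abbrev A := A0 K e kk ⧸ Iz K e kk

variable {K e kk}

lemma mem_Iz_iff {x : A0 K e kk} :
    x ∈ Iz K e kk ↔ x = single Mon.z (x.coeff Mon.z) := by
  constructor
  · intro hx
    rcases Ideal.mem_span_singleton.mp hx with ⟨r, hr⟩
    have hsupp : x.coeff.support ⊆ {Mon.z} := by
      intro m hm
      rw [hr] at hm
      rcases Finset.mem_mul.mp (support_coeff_mul_subset (single Mon.z 1) r hm) with ⟨a, ha, b, hb, hab⟩
      have : a = Mon.z := by
        have := Finsupp.support_single_subset ha
        simpa using this
      simp only [Finset.mem_singleton]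
      rw [← hab, this, z_mul]
    exact coeff_injective (by rw [coeff_single]; exact Finsupp.support_subset_singleton.mp hsupp)
  · intro hx
    refine Ideal.mem_span_singleton.mpr ⟨single Mon.z (x.coeff Mon.z), ?_⟩
    rw [single_mul_single, one_mul, z_mul]
    exact hx

section Beta

/-- the image of a monoid element in the quotient algebra -/
noncomputable def β (m : Mon e kk) : A K e kk := Ideal.Quotient.mkₐ K (Iz K e kk) (single m 1)

lemma β_mul (m m' : Mon e kk) : β (K := K) m * β m' = β (m * m') := by
  rw [β, β, β, ← map_mul, single_mul_single, one_mul]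

lemma β_z : β (K := K) (Mon.z : Mon e kk) = 0 := by
  rw [β, Ideal.Quotient.mkₐ_eq_mk, Ideal.Quotient.eq_zero_iff_mem]
  exact Ideal.subset_span rfl

lemma β_one : β (K := K) (1 : Mon e kk) = 1 := by
  rw [β, ← MonoidAlgebra.one_def, map_one]

lemma β_pow (m : Mon e kk) (n : ℕ) : β (K := K) m ^ n = β (m ^ n) := by
  induction n with
  | zero => rw [pow_zero, pow_zero, β_one]
  | succ n ih => rw [pow_succ, pow_succ, ih, β_mul]

end Beta

section BasisSection

/-- index type for the basis -/
abbrev BIdx (e kk : ℕ) := {m : Mon e kk // m ≠ Mon.z}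

variable (K e kk) in
/-- the K-linear section from coordinates into the quotient -/
noncomputable def Ψ : (BIdx e kk →₀ K) →ₗ[K] A K e kk :=
  (Ideal.Quotient.mkₐ K (Iz K e kk)).toLinearMap.comp
    ((coeffLinearEquiv K).symm.toLinearMap.comp <| Finsupp.lmapDomain K K (Subtype.val : BIdx e kk → Mon e kk))

lemma Ψ_single (i : BIdx e kk) (c : K) : Ψ K e kk (Finsupp.single i c) = c • β i.val := by
  have h1 : (Finsupp.single i c : BIdx e kk →₀ K) = c • Finsupp.single i 1 := by
    rw [Finsupp.smul_single, smul_eq_mul, mul_one]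
  rw [h1, map_smul]
  congr 1
  show (Ideal.Quotient.mkₐ K (Iz K e kk)).toLinearMap
      (ofCoeff (Finsupp.mapDomain Subtype.val (Finsupp.single i 1))) = β i.val
  rw [Finsupp.mapDomain_single]
  rfl

lemma Ψ_bijective : Function.Bijective (Ψ K e kk) := by
  constructor
  · rw [injective_iff_map_eq_zero]
    intro f hf
    have hf' : Ideal.Quotient.mk (Iz K e kk)
        (ofCoeff (Finsupp.mapDomain (Subtype.val : BIdx e kk → Mon e kk) f)) = 0 := hf
    have hmem : ofCoeff (Finsupp.mapDomain (Subtype.val : BIdx e kk → Mon e kk) f) ∈ Iz K e kk :=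
      Ideal.Quotient.eq_zero_iff_mem.mp hf'
    have heq := congrArg coeff (mem_Iz_iff.mp hmem)
    rw [coeff_ofCoeff, coeff_single] at heq
    ext p
    have := Finsupp.mapDomain_apply Subtype.val_injective f p
    rw [heq] at this
    rw [Finsupp.single_apply, if_neg (Ne.symm p.2)] at this
    simpa using this.symm
  · intro y
    obtain ⟨x, rfl⟩ := Ideal.Quotient.mk_surjective y
    refine ⟨Finsupp.subtypeDomain (fun m => m ≠ Mon.z) x.coeff, ?_⟩
    set g : A0 K e kk := ofCoeff (Finsupp.mapDomain (Subtype.val : BIdx e kk → Mon e kk)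
      (Finsupp.subtypeDomain (fun m => m ≠ Mon.z) x.coeff)) with hg
    show Ideal.Quotient.mk (Iz K e kk) g = Ideal.Quotient.mk (Iz K e kk) x
    rw [Ideal.Quotient.mk_eq_mk_iff_sub_mem]
    have hoff : ∀ m : Mon e kk, m ≠ Mon.z → (g - x).coeff m = 0 := by
      intro m hm
      have : g.coeff m = x.coeff m := by
        rw [hg, coeff_ofCoeff, Finsupp.mapDomain_apply Subtype.val_injective _ (⟨m, hm⟩ : BIdx e kk)]
        rfl
      show g.coeff m - x.coeff m = 0
      rw [this, sub_self]
    rw [mem_Iz_iff]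
    apply coeff_injective
    rw [coeff_single]
    apply Finsupp.support_subset_singleton.mp
    intro m hm
    simp only [Finset.mem_singleton]
    by_contra hne
    exact (Finsupp.mem_support_iff.mp hm) (hoff m hne)

variable (K e kk) in
/-- basis of the quotient algebra -/
noncomputable def bA : Module.Basis (BIdx e kk) K (A K e kk) :=
  Module.Basis.ofRepr (LinearEquiv.ofBijective (Ψ K e kk) Ψ_bijective).symm

lemma bA_repr_symm (f : BIdx e kk →₀ K) : (bA K e kk).repr.symm f = Ψ K e kk f := rfl

lemma bA_apply (i : BIdx e kk) : bA K e kk i = β i.val := by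
  rw [← Module.Basis.repr_symm_single_one, bA_repr_symm, Ψ_single, one_smul]

lemma repr_β (m : Mon e kk) :
    (bA K e kk).repr (β (K := K) m) =
      if h : m ≠ Mon.z then Finsupp.single (⟨m, h⟩ : BIdx e kk) 1 else 0 := by
  split_ifs with h
  · rw [← bA_apply ⟨m, h⟩, Module.Basis.repr_self]
  · push_neg at h
    subst h
    rw [β_z]
    simp

end BasisSection
end Stmt11

namespace Stmt11

open Mon MonoidAlgebra

variable {K : Type*} [Field K] {e kk : ℕ}

/-- the master coefficient formula for multiplication -/
lemma repr_mul (x : A K e kk) (q : Mon e kk) (p : BIdx e kk) :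
    (bA K e kk).repr (x * β q) p =
      ∑ m : BIdx e kk, (if m.val * q = p.val then (bA K e kk).repr x m else 0) := by
  conv_lhs => rw [← Module.Basis.sum_repr (bA K e kk) x]
  rw [Finset.sum_mul]
  have hterm : ∀ m : BIdx e kk,
      ((bA K e kk).repr x m • bA K e kk m) * β q = (bA K e kk).repr x m • β (m.val * q) := by
    intro m
    rw [smul_mul_assoc, bA_apply, β_mul]
  rw [Finset.sum_congr rfl (fun m _ => hterm m), map_sum, Finsupp.finset_sum_apply]
  refine Finset.sum_congr rfl ?_
  intro m _
  rw [map_smul, Finsupp.smul_apply, repr_β]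
  split_ifs with h1 h2 h2
  · -- m*q ≠ z, m*q = p
    rw [Finsupp.single_apply, if_pos (by exact Subtype.ext h2), smul_eq_mul, mul_one]
  · -- m*q ≠ z, m*q ≠ p
    rw [Finsupp.single_apply, if_neg (fun hc => h2 (congrArg Subtype.val hc)), smul_eq_mul, mul_zero]
  · -- m*q = z contradiction with = p
    exact absurd h2 (by push_neg at h1; rw [h1]; exact Ne.symm p.2)
  · simp

/-- extraction: if `x * β q = 0` and `m0` is the unique solution of `m * q = p`,
then the coefficient of `x` at `m0` vanishes -/
lemma repr_eq_zero_of_mul (x : A K e kk) (q : Mon e kk) (p m0 : BIdx e kk)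
    (hq : x * β q = 0)
    (hcond : ∀ m : BIdx e kk, m.val * q = p.val ↔ m = m0) :
    (bA K e kk).repr x m0 = 0 := by
  have h := repr_mul x q p
  rw [hq] at h
  simp only [map_zero, Finsupp.coe_zero, Pi.zero_apply] at h
  rw [Finset.sum_congr rfl (fun m _ => by rw [if_congr (hcond m) rfl rfl])] at h
  rw [Finset.sum_ite_eq' Finset.univ m0 (fun m => (bA K e kk).repr x m)] at h
  rw [if_pos (Finset.mem_univ m0)] at h
  exact h.symm

section Epsilon

variable (K e kk) in
/-- the character of the monoid -/
noncomputable def χ : Mon e kk →* K where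
  toFun m := if m = 1 then 1 else 0
  map_one' := if_pos rfl
  map_mul' m m' := by
    by_cases h : m = 1 <;> by_cases h' : m' = 1 <;>
      simp [h, h', mul_eq_one_iff (e := e) (kk := kk)]

lemma χ_apply (m : Mon e kk) : χ K e kk m = if m = 1 then 1 else 0 := rfl

variable (K e kk) in
/-- augmentation map -/
noncomputable def εA : A K e kk →ₐ[K] K :=
  Ideal.Quotient.liftₐ (Iz K e kk) ((MonoidAlgebra.lift K K (Mon e kk)) (χ K e kk))
    (by
      intro a ha
      rw [mem_Iz_iff.mp ha, lift_single]
      rw [show χ K e kk Mon.z = (0:K) by rw [χ_apply]; exact if_neg z_ne_one, smul_zero])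

lemma εA_β (m : Mon e kk) : εA K e kk (β m) = if m = 1 then 1 else 0 := by
  rw [β, εA, Ideal.Quotient.mkₐ_eq_mk, Ideal.Quotient.liftₐ_apply]
  exact (lift_single (χ K e kk) m (1 : K)).trans (by rw [one_smul, χ_apply])

lemma εA_repr (x : A K e kk) :
    εA K e kk x = (bA K e kk).repr x ⟨1, one_ne_z⟩ := by
  have hmaps : (εA K e kk).toLinearMap =
      (Finsupp.lapply (⟨1, one_ne_z⟩ : BIdx e kk)).comp (bA K e kk).repr.toLinearMap := by
    apply Module.Basis.ext (bA K e kk)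
    intro i
    simp only [LinearMap.comp_apply, AlgHom.toLinearMap_apply, LinearEquiv.coe_toLinearMap]
    rw [bA_apply, εA_β, repr_β, dif_pos i.2, Finsupp.lapply_apply, Finsupp.single_apply]
    by_cases h : (i : Mon e kk) = 1
    · rw [if_pos h, if_pos (Subtype.ext h : (⟨↑i, i.2⟩ : BIdx e kk) = ⟨1, one_ne_z⟩)]
    · rw [if_neg h, if_neg (fun hc => h (congrArg Subtype.val hc))]
  calc εA K e kk x = (εA K e kk).toLinearMap x := rfl
    _ = _ := by rw [hmaps]; rfl

lemma εA_surjective : Function.Surjective (εA K e kk) := fun c =>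
  ⟨algebraMap K (A K e kk) c, by rw [AlgHom.commutes]; simp⟩

variable (K e kk) in
/-- the maximal ideal -/
noncomputable def mI : Ideal (A K e kk) := RingHom.ker (εA K e kk)

lemma mI_isMaximal : (mI K e kk).IsMaximal :=
  RingHom.ker_isMaximal_of_surjective _ εA_surjective

lemma β_mem_mI (m : Mon e kk) (h : m ≠ 1) : β (K := K) m ∈ mI K e kk := by
  rw [mI, RingHom.mem_ker, εA_β, if_neg h]

end Epsilon

section Nilpotent

lemma β_nilpotent (m : Mon e kk) (h : m ≠ 1) : IsNilpotent (β (K := K) m) :=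
  ⟨2*e+6, by rw [β_pow, pow_eq_z m h, β_z]⟩

lemma nilpotent_of_mem_mI (x : A K e kk) (hx : x ∈ mI K e kk) : IsNilpotent x := by
  rw [← Module.Basis.sum_repr (bA K e kk) x]
  apply isNilpotent_sum
  intro i _
  by_cases h : i = ⟨1, one_ne_z⟩
  · subst h
    have h0 : (bA K e kk).repr x ⟨1, one_ne_z⟩ = 0 := by
      rw [← εA_repr]
      rwa [mI, RingHom.mem_ker] at hx
    rw [h0, zero_smul]
    exact IsNilpotent.zero
  · apply IsNilpotent.smul
    rw [bA_apply]
    exact β_nilpotent i.val (fun hc => h (Subtype.ext hc))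

lemma isUnit_of_εA_ne_zero (x : A K e kk) (hx : εA K e kk x ≠ 0) : IsUnit x := by
  set c := εA K e kk x with hc
  have hnil : IsNilpotent (x - algebraMap K (A K e kk) c) := by
    apply nilpotent_of_mem_mI _
    rw [mI, RingHom.mem_ker, map_sub, AlgHom.commutes]
    simp [hc]
  have hu : IsUnit (algebraMap K (A K e kk) c) := by
    apply IsUnit.map
    exact isUnit_iff_ne_zero.mpr hx
  have := IsNilpotent.isUnit_add_left_of_commute hnil hu (Commute.all _ _)
  simpa using this

instance : Nontrivial (A K e kk) := by
  refine nontrivial_of_ne 1 0 (fun h => ?_)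
  have := congrArg (εA K e kk) h
  simp only [map_one, map_zero] at this
  exact one_ne_zero this

lemma isLocalRing_A : IsLocalRing (A K e kk) := by
  apply IsLocalRing.of_isUnit_or_isUnit_one_sub_self
  intro a
  by_cases h : εA K e kk a = 0
  · right
    apply isUnit_of_εA_ne_zero
    rw [map_sub, map_one, h, sub_zero]
    exact one_ne_zero
  · left
    exact isUnit_of_εA_ne_zero a h

end Nilpotent
end Stmt11

namespace Stmt11

open Mon MonoidAlgebra

variable {K : Type*} [Field K] {e kk : ℕ}

section Filtration

variable (K e kk) in
/-- weight filtration -/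
noncomputable def W (j : ℕ) : Submodule K (A K e kk) :=
  Submodule.span K (β '' {m : Mon e kk | j ≤ ω m})

lemma mI_le_W2 : ∀ x ∈ mI K e kk, x ∈ W K e kk 2 := by
  intro x hx
  have h1 : x ∈ Submodule.span K (⇑(bA K e kk) '' {i : BIdx e kk | i.val ≠ 1}) := by
    rw [Module.Basis.mem_span_image]
    intro i hi
    simp only [Finset.coe_sort_coe, Set.mem_setOf_eq]
    intro hval
    have hieq : i = ⟨1, one_ne_z⟩ := Subtype.ext hval
    rw [Finset.mem_coe, Finsupp.mem_support_iff] at hi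
    apply hi
    rw [hieq, ← εA_repr]
    rwa [mI, RingHom.mem_ker] at hx
  refine Submodule.span_le.mpr ?_ h1
  rintro _ ⟨i, hi, rfl⟩
  rw [bA_apply]
  exact Submodule.subset_span ⟨i.val, two_le_ω i.val hi, rfl⟩

lemma W_mul {a b : A K e kk} {i j : ℕ} (ha : a ∈ W K e kk i) (hb : b ∈ W K e kk j) :
    a * b ∈ W K e kk (i + j) := by
  have hmul : W K e kk i * W K e kk j ≤ W K e kk (i+j) := by
    rw [W, W, Submodule.span_mul_span]
    apply Submodule.span_le.mpr
    intro y hy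
    rcases Set.mem_mul.mp hy with ⟨x1, hx1, x2, hx2, rfl⟩
    rcases hx1 with ⟨m, hm, rfl⟩
    rcases hx2 with ⟨m', hm', rfl⟩
    rw [β_mul]
    rcases ω_superadd m m' with hz | hle
    · rw [hz, β_z]
      exact Submodule.zero_mem _
    · refine Submodule.subset_span ⟨m*m', ?_, rfl⟩
      simp only [Set.mem_setOf_eq] at hm hm' ⊢
      omega
  exact hmul (Submodule.mul_mem_mul ha hb)

lemma W_bot : W K e kk (2*e+6) = ⊥ := by
  refine le_antisymm ?_ bot_le
  rw [W]
  apply Submodule.span_le.mpr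
  rintro _ ⟨m, hm, rfl⟩
  simp only [Set.mem_setOf_eq] at hm
  rw [eq_z_of_ω m hm, β_z]
  exact Submodule.zero_mem _

lemma pow_mem_W : ∀ (j : ℕ) (x : A K e kk), x ∈ mI K e kk ^ (j+1) → x ∈ W K e kk (2*(j+1)) := by
  intro j
  induction j with
  | zero =>
    intro x hx
    rw [zero_add, Submodule.pow_one] at hx
    exact mI_le_W2 x hx
  | succ j ih =>
    intro x hx
    rw [Submodule.pow_succ] at hx
    refine Submodule.mul_induction_on hx ?_ ?_
    · intro a ha b hb
      have := W_mul (ih a ha) (mI_le_W2 b hb)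
      rwa [show 2*(j+1)+2 = 2*(j+1+1) by ring] at this
    · intro y1 y2 hy1 hy2
      exact Submodule.add_mem _ hy1 hy2

lemma mI_pow_bot : mI K e kk ^ (e+3) = ⊥ := by
  refine le_antisymm ?_ bot_le
  intro x hx
  have := pow_mem_W (e+2) x (by rwa [show e+2+1 = e+3 from rfl])
  rw [show 2*(e+2+1) = 2*e+6 by ring, W_bot, Submodule.mem_bot] at this
  rw [this]
  exact Submodule.zero_mem _

end Filtration

section Socle

lemma pow_le_socle : mI K e kk ^ (e+2) ≤ (⊥ : Ideal (A K e kk)).colon (mI K e kk) := by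
  intro x hx
  rw [Submodule.mem_colon]
  intro p hp
  rw [smul_eq_mul]
  have hmem : x * p ∈ mI K e kk ^ (e+2) * mI K e kk := Submodule.mul_mem_mul hx hp
  rw [← Submodule.pow_succ, show e+2+1 = e+3 from rfl, mI_pow_bot] at hmem
  exact hmem

lemma s_mem_pow : β (top : Mon e kk) ∈ mI K e kk ^ (e+2) := by
  rw [← mt1_pow_top, ← β_pow (K := K)]
  exact Ideal.pow_mem_pow (β_mem_mI mt1 mt1_ne_one) _

lemma socle_le_span :
    ∀ x ∈ (⊥ : Ideal (A K e kk)).colon (mI K e kk),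
      x ∈ Submodule.span K {β (top : Mon e kk)} := by
  intro x hx
  rw [Submodule.mem_colon] at hx
  have hx' : ∀ p ∈ mI K e kk, x * p = 0 := by
    intro p hp
    have := hx p hp
    rwa [smul_eq_mul, Submodule.mem_bot] at this
  have ht : ∀ (i : ℕ) (hi : i ≤ e+1),
      (bA K e kk).repr x ⟨Mon.t ⟨i, by omega⟩, t_ne_z _⟩ = 0 := by
    intro i hi
    apply repr_eq_zero_of_mul x mt1 ⟨Mon.t ⟨i+1, by omega⟩, t_ne_z _⟩
      ⟨Mon.t ⟨i, by omega⟩, t_ne_z _⟩ (hx' _ (β_mem_mI _ mt1_ne_one))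
    intro m
    constructor
    · intro hm
      exact Subtype.ext ((mul_mt1_eq_iff m.val i (by omega)).mp hm)
    · rintro rfl
      exact (mul_mt1_eq_iff _ i (by omega)).mpr rfl
  have hu : ∀ j : Fin kk, (bA K e kk).repr x ⟨Mon.u j, u_ne_z j⟩ = 0 := by
    intro j
    apply repr_eq_zero_of_mul x (Mon.u j) ⟨top, top_ne_z⟩
      ⟨Mon.u j, u_ne_z j⟩ (hx' _ (β_mem_mI _ (u_ne_one j)))
    intro m
    constructor
    · intro hm
      exact Subtype.ext ((mul_u_eq_top_iff m.val j).mp hm)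
    · rintro rfl
      exact (mul_u_eq_top_iff _ j).mpr rfl
  have hall : ∀ p : BIdx e kk, p ≠ ⟨top, top_ne_z⟩ → (bA K e kk).repr x p = 0 := by
    rintro ⟨m, hm⟩ hne
    rcases m with _ | (i | j)
    · exact absurd rfl hm
    · by_cases hi : i.val ≤ e+1
      · have h0 := ht i.val hi
        have heq : (⟨Mon.t ⟨i.val, by omega⟩, t_ne_z _⟩ : BIdx e kk)
            = ⟨some (Sum.inl i), hm⟩ := by
          apply Subtype.ext
          simp [Mon.t, Fin.eta]
        rwa [heq] at h0
      · exfalso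
        apply hne
        apply Subtype.ext
        have : i.val = e+2 := by have := i.isLt; omega
        simp [Mon.top, Mon.t, Fin.ext_iff, this]
    · exact hu j
  have hxeq : x = (bA K e kk).repr x ⟨top, top_ne_z⟩ • β (top : Mon e kk) := by
    conv_lhs => rw [← Module.Basis.sum_repr (bA K e kk) x]
    rw [Finset.sum_eq_single (⟨top, top_ne_z⟩ : BIdx e kk)]
    · rw [bA_apply]
    · intro p _ hne
      rw [hall p hne, zero_smul]
    · intro habs
      exact absurd (Finset.mem_univ _) habs
  rw [hxeq]
  exact Submodule.smul_mem _ _ (Submodule.mem_span_singleton_self _)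

lemma socle_eq_pow :
    (⊥ : Ideal (A K e kk)).colon (mI K e kk) = mI K e kk ^ (e+2) := by
  refine le_antisymm ?_ pow_le_socle
  intro x hx
  rcases Submodule.mem_span_singleton.mp (socle_le_span x hx) with ⟨c, rfl⟩
  exact Submodule.smul_of_tower_mem _ c s_mem_pow

lemma β_top_ne_zero : β (top : Mon e kk) ≠ (0 : A K e kk) := by
  rw [← bA_apply ⟨top, top_ne_z⟩]
  exact Module.Basis.ne_zero _ _

lemma socle_restrict :
    ((⊥ : Ideal (A K e kk)).colon (mI K e kk)).restrictScalars K
      = Submodule.span K {β (top : Mon e kk)} := by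
  refine le_antisymm (fun x hx => socle_le_span x hx) ?_
  rw [Submodule.span_le, Set.singleton_subset_iff]
  exact pow_le_socle s_mem_pow

lemma finrank_socle :
    Module.finrank K (((⊥ : Ideal (A K e kk)).colon (mI K e kk)).restrictScalars K) = 1 := by
  rw [socle_restrict]
  exact finrank_span_singleton β_top_ne_zero

instance : FiniteDimensional K (A K e kk) := Module.Basis.finiteDimensional_of_finite (bA K e kk)

lemma finrank_A : Module.finrank K (A K e kk) = e + 3 + kk := by
  rw [Module.finrank_eq_card_basis (bA K e kk)]
  have h1 := Fintype.card_subtype_compl (fun m : Mon e kk => m = Mon.z)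
  rw [Fintype.card_subtype_eq] at h1
  have h2 : Fintype.card (Mon e kk) = e + 3 + kk + 1 := by
    simp [Mon]
  rw [h1, h2]
  omega

end Socle
end Stmt11

namespace Stmt11

open Mon MonoidAlgebra

variable {K : Type*} [Field K] {e kk : ℕ}

section Present

variable (K e kk) in
noncomputable def gens : Fin (kk+1) → A K e kk :=
  Fin.cons (β mt1) (fun j => β (Mon.u j))

variable (K e kk) in
noncomputable def φp : MvPolynomial (Fin (kk+1)) K →ₐ[K] A K e kk :=
  MvPolynomial.aeval (gens K e kk)

lemma β_mem_range (m : Mon e kk) : β m ∈ (φp K e kk).range := by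
  have hx0 : β (mt1 : Mon e kk) ∈ (φp K e kk).range := by
    refine ⟨MvPolynomial.X 0, ?_⟩
    show φp K e kk (MvPolynomial.X 0) = β mt1
    rw [φp, MvPolynomial.aeval_X, gens, Fin.cons_zero]
  rcases m with _ | (i | j)
  · rw [show (none : Mon e kk) = Mon.z from rfl, β_z]
    exact Subalgebra.zero_mem _
  · have hm : (some (Sum.inl i) : Mon e kk) = Mon.t ⟨i.val, by omega⟩ := by
      simp [Mon.t]
    rw [hm, ← mt1_pow i.val (by omega), ← β_pow]
    exact Subalgebra.pow_mem _ hx0 _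
  · refine ⟨MvPolynomial.X j.succ, ?_⟩
    show φp K e kk (MvPolynomial.X j.succ) = β (some (Sum.inr j))
    rw [φp, MvPolynomial.aeval_X, gens, Fin.cons_succ]
    rfl

lemma φp_surjective : Function.Surjective (φp K e kk) := by
  intro y
  have hmem : y ∈ (φp K e kk).range := by
    rw [← Module.Basis.sum_repr (bA K e kk) y]
    apply Subalgebra.sum_mem
    intro i _
    apply Subalgebra.smul_mem
    rw [bA_apply]
    exact β_mem_range i.val
  exact hmem

end Present

section Transport

lemma comap_colon_eq {R S : Type*} [CommRing R] [CommRing S] (f : R ≃+* S) (I J : Ideal S) :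
    Ideal.comap f (I.colon J) = (Ideal.comap f I).colon (Ideal.comap f J) := by
  ext x
  rw [Ideal.mem_comap, Submodule.mem_colon, Submodule.mem_colon]
  constructor
  · intro h q hq
    rw [smul_eq_mul, Ideal.mem_comap, map_mul]
    have := h (f q) (Ideal.mem_comap.mp hq)
    rwa [smul_eq_mul] at this
  · intro h p hp
    rcases f.surjective p with ⟨q, rfl⟩
    have := h q (Ideal.mem_comap.mpr hp)
    rw [smul_eq_mul, Ideal.mem_comap, map_mul] at this
    rwa [smul_eq_mul]

end Transport

theorem stmt11' (K : Type*) [Field K] (n d : ℕ)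
    (h2 : 2 ≤ d) (hdn : d ≤ n) :
    ∃ (k : ℕ) (I : Ideal (MvPolynomial (Fin k) K))
      (M : Ideal (MvPolynomial (Fin k) K ⧸ I)),
      IsLocalRing (MvPolynomial (Fin k) K ⧸ I) ∧ M.IsMaximal ∧
      FiniteDimensional K (MvPolynomial (Fin k) K ⧸ I) ∧
      Module.finrank K (MvPolynomial (Fin k) K ⧸ I) = n + 1 ∧
      (⊥ : Ideal (MvPolynomial (Fin k) K ⧸ I)).colon M = M ^ d ∧
      Module.finrank K
        (((⊥ : Ideal (MvPolynomial (Fin k) K ⧸ I)).colon M).restrictScalars K) = 1 := by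
  classical
  obtain ⟨e, rfl⟩ : ∃ e, d = e + 2 := ⟨d - 2, by omega⟩
  obtain ⟨kk, rfl⟩ : ∃ kk, n = (e + 2) + kk := ⟨n - (e+2), by omega⟩
  clear h2 hdn
  refine ⟨kk + 1, RingHom.ker (φp K e kk), ?_⟩
  have hsurj : Function.Surjective (φp K e kk) := φp_surjective
  let qe : (MvPolynomial (Fin (kk+1)) K ⧸ RingHom.ker (φp K e kk)) ≃ₐ[K] A K e kk :=
    Ideal.quotientKerAlgEquivOfSurjective hsurj
  let qer : (MvPolynomial (Fin (kk+1)) K ⧸ RingHom.ker (φp K e kk)) ≃+* A K e kk :=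
    qe.toRingEquiv
  refine ⟨Ideal.comap qer (mI K e kk), ?_, ?_, ?_, ?_, ?_, ?_⟩
  · -- local ring
    haveI : IsLocalRing (A K e kk) := isLocalRing_A
    haveI := RingHom.domain_nontrivial qer.toRingHom
    exact IsLocalRing.of_surjective' qer.symm.toRingHom qer.symm.surjective
  · -- maximal
    haveI := mI_isMaximal (K := K) (e := e) (kk := kk)
    exact Ideal.comap_isMaximal_of_surjective qer qer.surjective
  · -- finite dimensional
    exact Module.Finite.equiv qe.toLinearEquiv.symm
  · -- finrank
    rw [LinearEquiv.finrank_eq qe.toLinearEquiv, finrank_A]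
    omega
  · -- colon
    have h1 : (⊥ : Ideal _) = Ideal.comap qer ⊥ :=
      (Ideal.comap_bot_of_injective qer qer.injective).symm
    rw [h1, ← comap_colon_eq qer ⊥ (mI K e kk), socle_eq_pow,
      ← Ideal.map_symm, Ideal.map_pow, Ideal.map_symm]
  · -- finrank of socle
    have h1 : (⊥ : Ideal _) = Ideal.comap qer ⊥ :=
      (Ideal.comap_bot_of_injective qer qer.injective).symm
    have hcol : (⊥ : Ideal _).colon (Ideal.comap qer (mI K e kk))
        = Ideal.comap qer ((⊥ : Ideal (A K e kk)).colon (mI K e kk)) := by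
      rw [h1, ← comap_colon_eq qer ⊥ (mI K e kk)]
    rw [hcol]
    set S := ((⊥ : Ideal (A K e kk)).colon (mI K e kk)) with hS
    let el := qe.toLinearEquiv
    have heq : (Ideal.comap qer S).restrictScalars K
        = Submodule.comap (el : _ →ₗ[K] A K e kk) (S.restrictScalars K) := by
      ext x
      exact Iff.rfl
    rw [heq, Submodule.comap_equiv_eq_map_symm]
    rw [← LinearEquiv.finrank_eq (el.symm.submoduleMap (S.restrictScalars K))]
    exact finrank_socle

end Stmt11


/-- For all integers `n, d` with `2 ≤ d ≤ n`, there exists a local Gorenstein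
commutative `K`-algebra `A` with maximal ideal `m` such that `dim_K A = n + 1` and
`Soc A = m^d` (and `dim_K Soc A = 1`). The algebra is realized as a quotient of a
polynomial ring, `M` being its maximal ideal. -/
theorem stmt11 (K : Type*) [Field K] [IsAlgClosed K] [CharZero K] (n d : ℕ)
    (h2 : 2 ≤ d) (hdn : d ≤ n) :
    ∃ (k : ℕ) (I : Ideal (MvPolynomial (Fin k) K))
      (M : Ideal (MvPolynomial (Fin k) K ⧸ I)),
      IsLocalRing (MvPolynomial (Fin k) K ⧸ I) ∧ M.IsMaximal ∧
      FiniteDimensional K (MvPolynomial (Fin k) K ⧸ I) ∧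
      Module.finrank K (MvPolynomial (Fin k) K ⧸ I) = n + 1 ∧
      (⊥ : Ideal (MvPolynomial (Fin k) K ⧸ I)).colon M = M ^ d ∧
      Module.finrank K
        (((⊥ : Ideal (MvPolynomial (Fin k) K ⧸ I)).colon M).restrictScalars K) = 1 :=
  Stmt11.stmt11' K n d h2 hdn
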